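/- Let τ > 0 and (c_n) be a bounded sequence. Then the function ỹ(t) := √2 Σ_{n≥0} c_n e^{-n²π²t} is real analytic on (0,∞) and satisfies |ỹ^(i)(t)| ≤ √2 sup_n |c_n| · (Σ_{n≥0} e^{-n²π²τ/2}) · i!/(τ/2)^i for all t ≥ τ and all i ≥ 0. -/

import Mathlib

open Real

open Complex Set Metric Filter in
private lemma heat_summable {a : ℝ} (ha : 0 < a) :
    Summable (fun n : ℕ => Real.exp (-(n : ℝ) ^ 2 * π ^ 2 * a)) := by
  have hgeo : Summable (fun n : ℕ => Real.exp (-(π ^ 2 * a)) ^ n) := by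
    apply summable_geometric_of_lt_one (Real.exp_nonneg _)
    rw [Real.exp_lt_one_iff]
    have : (0:ℝ) < π ^ 2 * a := by positivity
    linarith
  refine Summable.of_nonneg_of_le (fun n => (Real.exp_pos _).le) (fun n => ?_) hgeo
  rw [← Real.exp_nat_mul]
  apply Real.exp_le_exp.2
  have hn : (n : ℝ) ≤ (n : ℝ) ^ 2 := by
    rcases Nat.eq_zero_or_pos n with h | h
    · simp [h]
    · have h1 : (1 : ℝ) ≤ (n : ℝ) := by exact_mod_cast h
      nlinarith
  have h2 := mul_le_mul_of_nonneg_right hn (show (0:ℝ) ≤ π ^ 2 * a by positivity)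
  nlinarith [h2]

private lemma self_le_exp (x : ℝ) : x ≤ Real.exp x := by
  have := Real.add_one_le_exp x
  linarith

open Complex Set Metric Filter in
theorem heat_trace_analytic_and_derivative_bounds
    (τ : ℝ) (hτ : 0 < τ) (c : ℕ → ℝ) (B : ℝ) (hc : ∀ n, |c n| ≤ B)
    (ytilde : ℝ → ℝ)
    (hy : ∀ t, ytilde t = Real.sqrt 2 * ∑' n : ℕ,
      c n * Real.exp (-(n : ℝ) ^ 2 * π ^ 2 * t)) :
    AnalyticOnNhd ℝ ytilde (Set.Ioi 0) ∧
      ∀ i : ℕ, ∀ t : ℝ, τ ≤ t →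
        |iteratedDeriv i ytilde t| ≤
          Real.sqrt 2 * B * (∑' n : ℕ, Real.exp (-(n : ℝ) ^ 2 * π ^ 2 * τ / 2)) *
            (Nat.factorial i : ℝ) / (τ / 2) ^ i := by
  have hB : 0 ≤ B := (abs_nonneg _).trans (hc 0)
  set k : ℕ → ℂ := fun n => -(n : ℂ) ^ 2 * (π : ℂ) ^ 2 with hk
  have hknorm : ∀ n : ℕ, ‖k n‖ = (n : ℝ) ^ 2 * π ^ 2 := by
    intro n
    simp only [hk, norm_mul, norm_neg, norm_pow]
    simp [_root_.abs_of_nonneg Real.pi_pos.le]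
  have hkre : ∀ (n : ℕ) (z : ℂ), (k n * z).re = -(n : ℝ) ^ 2 * π ^ 2 * z.re := by
    intro n z
    have h : k n = ((-(n : ℝ) ^ 2 * π ^ 2 : ℝ) : ℂ) := by push_cast [hk]; ring
    rw [h, Complex.re_ofReal_mul]
  set F : ℂ → ℂ := fun z =>
    ((Real.sqrt 2 : ℝ) : ℂ) * ∑' n : ℕ, ((c n : ℝ) : ℂ) * Complex.exp (k n * z) with hF
  -- norm of each term
  have hterm_norm : ∀ (n : ℕ) (z : ℂ),
      ‖((c n : ℝ) : ℂ) * Complex.exp (k n * z)‖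
        = |c n| * Real.exp (-(n : ℝ) ^ 2 * π ^ 2 * z.re) := by
    intro n z
    rw [norm_mul, Complex.norm_exp, hkre]
    simp
  -- summability of terms at points of the half plane
  have hsum_at : ∀ (z : ℂ), 0 < z.re →
      Summable (fun n : ℕ => ((c n : ℝ) : ℂ) * Complex.exp (k n * z)) := by
    intro z hz
    apply Summable.of_norm
    apply Summable.of_nonneg_of_le (fun n => norm_nonneg _) (fun n => ?_)
      ((heat_summable hz).mul_left B)
    rw [hterm_norm]
    exact mul_le_mul (hc n) le_rfl (Real.exp_pos _).le hB
  -- derivative of each term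
  have hterm_deriv : ∀ (n : ℕ) (z : ℂ),
      HasDerivAt (fun w : ℂ => ((c n : ℝ) : ℂ) * Complex.exp (k n * w))
        (((c n : ℝ) : ℂ) * (Complex.exp (k n * z) * k n)) z := by
    intro n z
    have h1 : HasDerivAt (fun w : ℂ => k n * w) (k n) z := by
      simpa using (hasDerivAt_id z).const_mul (k n)
    exact h1.cexp.const_mul _
  -- differentiability of F on the right half plane
  have hFdiff : ∀ z₀ : ℂ, 0 < z₀.re → DifferentiableAt ℂ F z₀ := by
    intro z₀ hz₀
    set a : ℝ := z₀.re with ha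
    have ha4 : 0 < a / 4 := by positivity
    have hopen : IsOpen {z : ℂ | a / 2 < z.re} := isOpen_lt continuous_const Complex.continuous_re
    have hconn : IsPreconnected {z : ℂ | a / 2 < z.re} :=
      (convex_halfSpace_re_gt (a / 2)).isPreconnected
    have hmem : z₀ ∈ {z : ℂ | a / 2 < z.re} := by
      simp only [mem_setOf_eq]; linarith
    have hu : Summable (fun n : ℕ => B * (4 / a) * Real.exp (-(n : ℝ) ^ 2 * π ^ 2 * (a / 4))) :=
      (heat_summable ha4).mul_left _
    have hdF := hasDerivAt_tsum_of_isPreconnected hu hopen hconn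
      (fun n y _ => hterm_deriv n y) ?_ hmem (hsum_at z₀ hz₀) hmem
    · exact (hdF.differentiableAt).const_mul _
    · intro n y hy'
      simp only [mem_setOf_eq] at hy'
      rw [norm_mul, norm_mul, Complex.norm_exp,
        hkre, hknorm]
      have h1 : ‖((c n : ℝ) : ℂ)‖ = |c n| := by simp
      rw [h1]
      have e1 : Real.exp (-(n : ℝ) ^ 2 * π ^ 2 * y.re) ≤
          Real.exp (-(n : ℝ) ^ 2 * π ^ 2 * (a / 2)) := by
        apply Real.exp_le_exp.2
        nlinarith [mul_le_mul_of_nonneg_left hy'.le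
          (show (0:ℝ) ≤ (n : ℝ) ^ 2 * π ^ 2 by positivity)]
      have e2 : (n : ℝ) ^ 2 * π ^ 2 ≤ (4 / a) * Real.exp ((n : ℝ) ^ 2 * π ^ 2 * (a / 4)) := by
        have h5 := self_le_exp ((n : ℝ) ^ 2 * π ^ 2 * (a / 4))
        have h4a : (0:ℝ) < 4 / a := by positivity
        calc (n : ℝ) ^ 2 * π ^ 2 = (4 / a) * ((n : ℝ) ^ 2 * π ^ 2 * (a / 4)) := by
              field_simp
          _ ≤ (4 / a) * Real.exp ((n : ℝ) ^ 2 * π ^ 2 * (a / 4)) :=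
              mul_le_mul_of_nonneg_left h5 h4a.le
      calc |c n| * (Real.exp (-(n : ℝ) ^ 2 * π ^ 2 * y.re) * ((n : ℝ) ^ 2 * π ^ 2))
          ≤ B * (Real.exp (-(n : ℝ) ^ 2 * π ^ 2 * (a / 2)) *
            ((4 / a) * Real.exp ((n : ℝ) ^ 2 * π ^ 2 * (a / 4)))) := by
            apply mul_le_mul (hc n)
            · exact mul_le_mul e1 e2 (by positivity) (Real.exp_pos _).le
            · positivity
            · exact hB
        _ = B * (4 / a) * (Real.exp (-(n : ℝ) ^ 2 * π ^ 2 * (a / 2)) *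
            Real.exp ((n : ℝ) ^ 2 * π ^ 2 * (a / 4))) := by ring
        _ = B * (4 / a) * Real.exp (-(n : ℝ) ^ 2 * π ^ 2 * (a / 4)) := by
            rw [← Real.exp_add]
            congr 1
            ring
  have hSopen : IsOpen {z : ℂ | 0 < z.re} := isOpen_lt continuous_const Complex.continuous_re
  have hFdOn : DifferentiableOn ℂ F {z : ℂ | 0 < z.re} := fun z hz =>
    (hFdiff z hz).differentiableWithinAt
  have hFan : AnalyticOnNhd ℂ F {z : ℂ | 0 < z.re} := hFdOn.analyticOnNhd hSopen
  have hFian : ∀ i : ℕ, AnalyticOnNhd ℂ (iteratedDeriv i F) {z : ℂ | 0 < z.re} := by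
    intro i
    induction i with
    | zero => simpa [iteratedDeriv_zero] using hFan
    | succ i ih => rw [iteratedDeriv_succ]; exact ih.deriv
  -- base identity
  have hbase : ∀ t : ℝ, 0 < t → ytilde t = (F ((t : ℝ) : ℂ)).re := by
    intro t ht
    rw [hy t, show F ((t : ℝ) : ℂ) = ((Real.sqrt 2 : ℝ) : ℂ) *
      ∑' n : ℕ, ((c n : ℝ) : ℂ) * Complex.exp (k n * ((t : ℝ) : ℂ)) from rfl]
    have hterm : ∀ n : ℕ, ((c n : ℝ) : ℂ) * Complex.exp (k n * ((t : ℝ) : ℂ)) =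
        ((c n * Real.exp (-(n : ℝ) ^ 2 * π ^ 2 * t) : ℝ) : ℂ) := by
      intro n
      rw [Complex.ofReal_mul, Complex.ofReal_exp]
      congr 2
      push_cast [hk]
      ring
    rw [tsum_congr hterm, ← Complex.ofReal_tsum, ← Complex.ofReal_mul, Complex.ofReal_re]
  -- transfer of iterated derivatives
  have hkey : ∀ i : ℕ, ∀ t : ℝ, 0 < t →
      iteratedDeriv i ytilde t = (iteratedDeriv i F ((t : ℝ) : ℂ)).re := by
    intro i
    induction i with
    | zero => intro t ht; simpa [iteratedDeriv_zero] using hbase t ht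
    | succ i ih =>
      intro t ht
      have hev : iteratedDeriv i ytilde =ᶠ[nhds t]
          (fun s : ℝ => (iteratedDeriv i F ((s : ℝ) : ℂ)).re) := by
        filter_upwards [isOpen_Ioi.mem_nhds (show t ∈ Ioi (0:ℝ) from ht)] with s hs
        exact ih s hs
      rw [iteratedDeriv_succ, hev.deriv_eq]
      have hdF : HasDerivAt (iteratedDeriv i F) (iteratedDeriv (i + 1) F ((t : ℝ) : ℂ))
          ((t : ℝ) : ℂ) := by
        rw [iteratedDeriv_succ]
        exact ((hFian i ((t : ℝ) : ℂ) (by simpa using ht)).differentiableAt).hasDerivAt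
      exact hdF.real_of_complex.deriv
  constructor
  · -- analyticity
    intro t ht
    have hA : AnalyticAt ℂ F ((t : ℝ) : ℂ) := hFan _ (by simpa using ht)
    have h3 : AnalyticAt ℝ (fun s : ℝ => F ((s : ℝ) : ℂ)) t :=
      hA.restrictScalars.comp (Complex.ofRealCLM.analyticAt t)
    have h4 : AnalyticAt ℝ (fun s : ℝ => (F ((s : ℝ) : ℂ)).re) t :=
      (Complex.reCLM.analyticAt _).comp h3
    apply h4.congr
    filter_upwards [isOpen_Ioi.mem_nhds ht] with s hs
    exact (hbase s hs).symm
  · -- derivative bounds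
    intro i t ht
    have ht0 : 0 < t := hτ.trans_le ht
    set M : ℝ := Real.sqrt 2 * B * (∑' n : ℕ, Real.exp (-(n : ℝ) ^ 2 * π ^ 2 * τ / 2)) with hM
    have hsumτ : Summable (fun n : ℕ => Real.exp (-(n : ℝ) ^ 2 * π ^ 2 * (τ / 2))) :=
      heat_summable (by positivity)
    have hMτ : (∑' n : ℕ, Real.exp (-(n : ℝ) ^ 2 * π ^ 2 * τ / 2))
        = ∑' n : ℕ, Real.exp (-(n : ℝ) ^ 2 * π ^ 2 * (τ / 2)) :=
      tsum_congr fun n => by rw [mul_div_assoc]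
    have hM0 : 0 ≤ M := by
      apply mul_nonneg (mul_nonneg (Real.sqrt_nonneg _) hB)
      exact tsum_nonneg fun n => (Real.exp_pos _).le
    -- bound on F on re z ≥ τ/2
    have hFle : ∀ z : ℂ, τ / 2 ≤ z.re → ‖F z‖ ≤ M := by
      intro z hz
      have hzpos : 0 < z.re := lt_of_lt_of_le (by positivity) hz
      have hsn : Summable (fun n : ℕ => ‖((c n : ℝ) : ℂ) * Complex.exp (k n * z)‖) := by
        simp only [hterm_norm]
        apply Summable.of_nonneg_of_le (fun n => by positivity) (fun n => ?_)
          (hsumτ.mul_left B)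
        apply mul_le_mul (hc n) (Real.exp_le_exp.2 ?_) (Real.exp_pos _).le hB
        nlinarith [mul_le_mul_of_nonneg_left hz
          (show (0:ℝ) ≤ (n : ℝ) ^ 2 * π ^ 2 by positivity)]
      calc ‖F z‖ = Real.sqrt 2 * ‖∑' n : ℕ, ((c n : ℝ) : ℂ) * Complex.exp (k n * z)‖ := by
            rw [hF, norm_mul]
            congr 1
            simp
        _ ≤ Real.sqrt 2 * ∑' n : ℕ, ‖((c n : ℝ) : ℂ) * Complex.exp (k n * z)‖ :=
            mul_le_mul_of_nonneg_left (norm_tsum_le_tsum_norm hsn) (Real.sqrt_nonneg 2)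
        _ ≤ Real.sqrt 2 * ∑' n : ℕ, B * Real.exp (-(n : ℝ) ^ 2 * π ^ 2 * (τ / 2)) := by
            apply mul_le_mul_of_nonneg_left _ (Real.sqrt_nonneg 2)
            apply Summable.tsum_le_tsum _ hsn (hsumτ.mul_left B)
            intro n
            rw [hterm_norm]
            apply mul_le_mul (hc n) (Real.exp_le_exp.2 ?_) (Real.exp_pos _).le hB
            nlinarith [mul_le_mul_of_nonneg_left hz
              (show (0:ℝ) ≤ (n : ℝ) ^ 2 * π ^ 2 by positivity)]
        _ = M := by
            rw [tsum_mul_left, hM, hMτ]; ring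
    -- Cauchy estimate
    have hRpos : (0:ℝ) < τ / 2 := by positivity
    set R : NNReal := ⟨τ / 2, hRpos.le⟩ with hR
    have hRc : (R : ℝ) = τ / 2 := rfl
    have hRpos' : 0 < R := by
      rw [← NNReal.coe_lt_coe]; simpa [hRc] using hRpos
    have hball : ∀ z ∈ closedBall ((t : ℝ) : ℂ) (R : ℝ), τ / 2 ≤ z.re := by
      intro z hz
      have h1 : |(z - ((t : ℝ) : ℂ)).re| ≤ ‖z - ((t : ℝ) : ℂ)‖ :=
        Complex.abs_re_le_norm _
      have h2 : ‖z - ((t : ℝ) : ℂ)‖ ≤ τ / 2 := by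
        rw [← Complex.dist_eq]
        simpa [hRc] using mem_closedBall.1 hz
      have h3 : (z - ((t : ℝ) : ℂ)).re = z.re - t := by simp
      rw [h3] at h1
      have h4 := abs_le.1 (h1.trans h2)
      linarith [h4.1]
    have hd : DifferentiableOn ℂ F (closedBall ((t : ℝ) : ℂ) (R : ℝ)) := fun z hz =>
      (hFdiff z (lt_of_lt_of_le hRpos (hball z hz))).differentiableWithinAt
    have hps := hd.hasFPowerSeriesOnBall hRpos'
    set p := cauchyPowerSeries F ((t : ℝ) : ℂ) (R : ℝ) with hp
    have hfs := hps.factorial_smul (1 : ℂ) i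
    have hnormF : ‖iteratedDeriv i F ((t : ℝ) : ℂ)‖
        = (Nat.factorial i : ℝ) * ‖p i (fun _ => (1 : ℂ))‖ := by
      rw [iteratedDeriv_eq_iteratedFDeriv, ← hfs, ← Nat.cast_smul_eq_nsmul ℝ, norm_smul]
      simp
    have hple : ‖p i (fun _ => (1 : ℂ))‖ ≤ ‖p i‖ := by
      have h := (p i).le_opNorm (fun _ => (1 : ℂ))
      simpa using h
    -- integral bound
    have hcont : Continuous (fun θ : ℝ => ‖F (circleMap ((t : ℝ) : ℂ) (R : ℝ) θ)‖) := by
      apply Continuous.norm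
      apply continuous_iff_continuousAt.2
      intro θ
      have hmem : circleMap ((t : ℝ) : ℂ) (R : ℝ) θ ∈ closedBall ((t : ℝ) : ℂ) (R : ℝ) :=
        sphere_subset_closedBall (circleMap_mem_sphere _ hRpos.le θ)
      exact ((hFdiff _ (lt_of_lt_of_le hRpos (hball _ hmem))).continuousAt).comp
        (continuous_circleMap _ _).continuousAt
    have hint : (2 * π)⁻¹ * ∫ θ in (0:ℝ)..2 * π, ‖F (circleMap ((t : ℝ) : ℂ) (R : ℝ) θ)‖ ≤ M := by
      have h1 : (∫ θ in (0:ℝ)..2 * π, ‖F (circleMap ((t : ℝ) : ℂ) (R : ℝ) θ)‖)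
          ≤ ∫ _ in (0:ℝ)..2 * π, M := by
        apply intervalIntegral.integral_mono_on Real.two_pi_pos.le
          (hcont.intervalIntegrable _ _) intervalIntegrable_const
        intro θ _
        exact hFle _ (hball _
          (sphere_subset_closedBall (circleMap_mem_sphere _ hRpos.le θ)))
      rw [intervalIntegral.integral_const, sub_zero, smul_eq_mul] at h1
      have h2 : (2 * π)⁻¹ * (∫ θ in (0:ℝ)..2 * π, ‖F (circleMap ((t : ℝ) : ℂ) (R : ℝ) θ)‖)
          ≤ (2 * π)⁻¹ * (2 * π * M) :=
        mul_le_mul_of_nonneg_left h1 (by positivity)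
      have h3 : (2 * π)⁻¹ * (2 * π * M) = M := by
        field_simp
      linarith
    have hcp := norm_cauchyPowerSeries_le F ((t : ℝ) : ℂ) (R : ℝ) i
    rw [← hp] at hcp
    have habsR : |(R : ℝ)| = τ / 2 := by rw [hRc]; exact abs_of_nonneg hRpos.le
    have hplei : ‖p i‖ ≤ M * ((τ / 2)⁻¹) ^ i := by
      refine hcp.trans ?_
      rw [habsR]
      exact mul_le_mul_of_nonneg_right hint (by positivity)
    calc |iteratedDeriv i ytilde t| = |(iteratedDeriv i F ((t : ℝ) : ℂ)).re| := by
          rw [hkey i t ht0]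
      _ ≤ ‖iteratedDeriv i F ((t : ℝ) : ℂ)‖ := by
          exact Complex.abs_re_le_norm _
      _ = (Nat.factorial i : ℝ) * ‖p i (fun _ => (1 : ℂ))‖ := hnormF
      _ ≤ (Nat.factorial i : ℝ) * (M * ((τ / 2)⁻¹) ^ i) := by
          apply mul_le_mul_of_nonneg_left (hple.trans hplei) (by positivity)
      _ = Real.sqrt 2 * B * (∑' n : ℕ, Real.exp (-(n : ℝ) ^ 2 * π ^ 2 * τ / 2)) *
            (Nat.factorial i : ℝ) / (τ / 2) ^ i := by
          rw [← hM, inv_pow, div_eq_mul_inv]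
          ring
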